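/- Let n ≥ 4 and let σ_1², ..., σ_n² be positive reals such that the sequence (0, σ_1², ..., σ_n², 0) is concave. Then ((n−1)/n) Σ_{i=1}^n σ_i² > 2 · sup over nonzero x ∈ ℝⁿ with Σ x_i = 0 of (Σ_i σ_i² x_i²)/(Σ_i x_i²). -/

import Mathlib

set_option maxHeartbeats 1000000


lemma tent1 (x1 x2 x3 x4 : ℝ) (h : x1 + x2 + x3 + x4 = 0)
    (hx : 0 < x1^2 + x2^2 + x3^2 + x4^2) :
    0 < (15/2) * (x1^2+x2^2+x3^2+x4^2) - (8*x1^2+6*x2^2+4*x3^2+2*x4^2) := by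
  have hx1 : x1 = -(x2+x3+x4) := by linarith
  subst hx1
  have hx' : 0 < x2^2+x3^2+x4^2 := by nlinarith [sq_nonneg (x2-x3), sq_nonneg (x2-x4), sq_nonneg (x3-x4)]
  nlinarith [sq_nonneg (x2-x3-x4), sq_nonneg (2*x3-x4), sq_nonneg x4, hx']

lemma tent2 (x1 x2 x3 x4 : ℝ) (h : x1 + x2 + x3 + x4 = 0)
    (hx : 0 < x1^2 + x2^2 + x3^2 + x4^2) :
    0 < (45/4) * (x1^2+x2^2+x3^2+x4^2) - (6*x1^2+12*x2^2+8*x3^2+4*x4^2) := by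
  have hx2 : x2 = -(x1+x3+x4) := by linarith
  subst hx2
  have hx' : 0 < x1^2+x3^2+x4^2 := by nlinarith [sq_nonneg (x1-x3), sq_nonneg (x1-x4), sq_nonneg (x3-x4)]
  nlinarith [sq_nonneg (x1-x3), sq_nonneg (x1-x4), sq_nonneg (x3-x4), sq_nonneg x1, sq_nonneg x4, hx']

lemma tent3 (x1 x2 x3 x4 : ℝ) (h : x1 + x2 + x3 + x4 = 0)
    (hx : 0 < x1^2 + x2^2 + x3^2 + x4^2) :
    0 < (45/4) * (x1^2+x2^2+x3^2+x4^2) - (4*x1^2+8*x2^2+12*x3^2+6*x4^2) := by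
  have hx3 : x3 = -(x1+x2+x4) := by linarith
  subst hx3
  have hx' : 0 < x1^2+x2^2+x4^2 := by nlinarith [sq_nonneg (x1-x2), sq_nonneg (x1-x4), sq_nonneg (x2-x4)]
  nlinarith [sq_nonneg (x4-x2), sq_nonneg (x4-x1), sq_nonneg (x2-x1), sq_nonneg x4, sq_nonneg x1, hx']

lemma tent4 (x1 x2 x3 x4 : ℝ) (h : x1 + x2 + x3 + x4 = 0)
    (hx : 0 < x1^2 + x2^2 + x3^2 + x4^2) :
    0 < (15/2) * (x1^2+x2^2+x3^2+x4^2) - (2*x1^2+4*x2^2+6*x3^2+8*x4^2) := by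
  have hx4 : x4 = -(x1+x2+x3) := by linarith
  subst hx4
  have hx' : 0 < x1^2+x2^2+x3^2 := by nlinarith [sq_nonneg (x1-x2), sq_nonneg (x1-x3), sq_nonneg (x2-x3)]
  nlinarith [sq_nonneg (x3-x2-x1), sq_nonneg (2*x2-x1), sq_nonneg x1, hx']


/-- the n = 4 pointwise inequality -/
lemma key4 (b1 b2 b3 b4 : ℝ) (hb1 : 0 < b1) (hb4 : 0 < b4)
    (hc1 : 0 ≤ 2*b1 - b2) (hc2 : 0 ≤ 2*b2 - b1 - b3)
    (hc3 : 0 ≤ 2*b3 - b2 - b4) (hc4 : 0 ≤ 2*b4 - b3)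
    (x1 x2 x3 x4 : ℝ) (h : x1 + x2 + x3 + x4 = 0)
    (hx : 0 < x1^2 + x2^2 + x3^2 + x4^2) :
    2 * (b1*x1^2 + b2*x2^2 + b3*x3^2 + b4*x4^2) <
      (3/4) * (b1+b2+b3+b4) * (x1^2+x2^2+x3^2+x4^2) := by
  obtain ⟨G1, hG1⟩ : ∃ g, (15/2) * (x1^2+x2^2+x3^2+x4^2) - (8*x1^2+6*x2^2+4*x3^2+2*x4^2) = g := ⟨_, rfl⟩
  obtain ⟨G2, hG2⟩ : ∃ g, (45/4) * (x1^2+x2^2+x3^2+x4^2) - (6*x1^2+12*x2^2+8*x3^2+4*x4^2) = g := ⟨_, rfl⟩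
  obtain ⟨G3, hG3⟩ : ∃ g, (45/4) * (x1^2+x2^2+x3^2+x4^2) - (4*x1^2+8*x2^2+12*x3^2+6*x4^2) = g := ⟨_, rfl⟩
  obtain ⟨G4, hG4⟩ : ∃ g, (15/2) * (x1^2+x2^2+x3^2+x4^2) - (2*x1^2+4*x2^2+6*x3^2+8*x4^2) = g := ⟨_, rfl⟩
  have hg1 : 0 < G1 := hG1 ▸ tent1 x1 x2 x3 x4 h hx
  have hg2 : 0 < G2 := hG2 ▸ tent2 x1 x2 x3 x4 h hx
  have hg3 : 0 < G3 := hG3 ▸ tent3 x1 x2 x3 x4 h hx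
  have hg4 : 0 < G4 := hG4 ▸ tent4 x1 x2 x3 x4 h hx
  have hid : 5 * ((3/4) * (b1+b2+b3+b4) * (x1^2+x2^2+x3^2+x4^2)
        - 2 * (b1*x1^2 + b2*x2^2 + b3*x3^2 + b4*x4^2))
      = (2*b1 - b2)*G1 + (2*b2 - b1 - b3)*G2 + (2*b3 - b2 - b4)*G3 + (2*b4 - b3)*G4 := by
    rw [← hG1, ← hG2, ← hG3, ← hG4]; ring
  have hcsum : 0 < (2*b1 - b2) + (2*b2 - b1 - b3) + (2*b3 - b2 - b4) + (2*b4 - b3) := by linarith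
  have hpos : 0 < (2*b1 - b2)*G1 + (2*b2 - b1 - b3)*G2 + (2*b3 - b2 - b4)*G3 + (2*b4 - b3)*G4 := by
    rcases (by by_contra hcon; push_neg at hcon; obtain ⟨a, b, c, d⟩ := hcon; linarith :
        0 < 2*b1 - b2 ∨ 0 < 2*b2 - b1 - b3 ∨ 0 < 2*b3 - b2 - b4 ∨ 0 < 2*b4 - b3) with h' | h' | h' | h'
    · linarith [mul_pos h' hg1, mul_nonneg hc2 hg2.le, mul_nonneg hc3 hg3.le, mul_nonneg hc4 hg4.le]
    · linarith [mul_pos h' hg2, mul_nonneg hc1 hg1.le, mul_nonneg hc3 hg3.le, mul_nonneg hc4 hg4.le]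
    · linarith [mul_pos h' hg3, mul_nonneg hc1 hg1.le, mul_nonneg hc2 hg2.le, mul_nonneg hc4 hg4.le]
    · linarith [mul_pos h' hg4, mul_nonneg hc1 hg1.le, mul_nonneg hc2 hg2.le, mul_nonneg hc3 hg3.le]
  linarith
section chord
variable (n : ℕ) (b : ℕ → ℝ)

lemma dmono (hconc : ∀ i, i + 2 ≤ n + 1 → b (i + 1) ≥ (b i + b (i + 2)) / 2)
    {s t : ℕ} (hst : s ≤ t) (htn : t ≤ n) :
    b (t + 1) - b t ≤ b (s + 1) - b s := by
  have key : ∀ u, b (min (u+1) n + 1) - b (min (u+1) n) ≤ b (min u n + 1) - b (min u n) := by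
    intro u
    rcases le_or_gt (u + 1) n with h | h
    · rw [min_eq_left h, min_eq_left (by omega : u ≤ n)]
      have := hconc u (by omega)
      linarith
    · have e1 : min (u+1) n = n := by omega
      have e2 : min u n = n := by omega
      rw [e1, e2]
  have anti : Antitone fun u => b (min u n + 1) - b (min u n) :=
    antitone_nat_of_succ_le key
  have := anti hst
  simpa [min_eq_left htn, min_eq_left (le_trans hst htn)] using this

lemma b_eq_sum (hb0 : b 0 = 0) (m : ℕ) :
    b m = ∑ t ∈ Finset.Ico 0 m, (b (t + 1) - b t) := by
  rw [← Finset.range_eq_Ico, Finset.sum_range_sub b m, hb0, sub_zero]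

lemma chord_left (hb0 : b 0 = 0)
    (hconc : ∀ i, i + 2 ≤ n + 1 → b (i + 1) ≥ (b i + b (i + 2)) / 2)
    {i m : ℕ} (hi1 : 1 ≤ i) (him : i ≤ m) (hmn : m ≤ n) :
    (i : ℝ) * b m ≤ (m : ℝ) * b i := by
  obtain ⟨j, rfl⟩ : ∃ j, i = j + 1 := ⟨i - 1, by omega⟩
  have hbi : b (j+1) = ∑ t ∈ Finset.Ico 0 (j+1), (b (t + 1) - b t) := b_eq_sum b hb0 _
  have hbm : b m = ∑ t ∈ Finset.Ico 0 (j+1), (b (t + 1) - b t)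
      + ∑ t ∈ Finset.Ico (j+1) m, (b (t + 1) - b t) := by
    rw [b_eq_sum b hb0 m, Finset.sum_Ico_consecutive _ (Nat.zero_le _) him]
  have hA : ((j:ℝ)+1) * (b (j+1) - b j) ≤ ∑ t ∈ Finset.Ico 0 (j+1), (b (t + 1) - b t) := by
    have := Finset.card_nsmul_le_sum (Finset.Ico 0 (j+1)) (fun t => b (t+1) - b t)
      (b (j+1) - b j) (fun t ht => by
        refine dmono n b hconc ?_ ?_ <;> simp at ht <;> omega)
    rw [nsmul_eq_mul, Nat.card_Ico] at this
    push_cast at this ⊢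
    linarith
  have hB : ∑ t ∈ Finset.Ico (j+1) m, (b (t + 1) - b t) ≤ ((m:ℝ) - ((j:ℝ)+1)) * (b (j+1) - b j) := by
    have := Finset.sum_le_card_nsmul (Finset.Ico (j+1) m) (fun t => b (t+1) - b t)
      (b (j+1) - b j) (fun t ht => by
        refine dmono n b hconc ?_ ?_ <;> simp at ht <;> omega)
    rw [nsmul_eq_mul, Nat.card_Ico, Nat.cast_sub him] at this
    push_cast at this ⊢
    linarith
  have hmi : ((j:ℝ)+1) ≤ (m:ℝ) := by exact_mod_cast him
  have hi0 : (0:ℝ) ≤ (j:ℝ)+1 := by positivity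
  rw [hbm]
  push_cast
  nlinarith [hA, hB, hmi, hi0, hbi]

lemma chord_right (hb0 : b 0 = 0) (hbn : b (n + 1) = 0)
    (hconc : ∀ i, i + 2 ≤ n + 1 → b (i + 1) ≥ (b i + b (i + 2)) / 2)
    {i m : ℕ} (hm1 : 1 ≤ m) (hmi : m ≤ i) (hin : i ≤ n) :
    ((n : ℝ) + 1 - i) * b m ≤ ((n : ℝ) + 1 - m) * b i := by
  obtain ⟨j, rfl⟩ : ∃ j, i = j + 1 := ⟨i - 1, by omega⟩
  have htotal : ∑ t ∈ Finset.Ico 0 (n+1), (b (t + 1) - b t) = 0 := by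
    rw [← Finset.range_eq_Ico, Finset.sum_range_sub b, hb0, hbn, sub_zero]
  have hsplit : ∀ k, k ≤ n + 1 → b k = - ∑ t ∈ Finset.Ico k (n+1), (b (t + 1) - b t) := by
    intro k hk
    have h2 : ∑ t ∈ Finset.Ico 0 k, (b (t + 1) - b t)
        + ∑ t ∈ Finset.Ico k (n+1), (b (t + 1) - b t) = 0 := by
      rw [Finset.sum_Ico_consecutive _ (Nat.zero_le _) hk, htotal]
    have hbk := b_eq_sum b hb0 k
    linarith
  have hbi : b (j+1) = - ∑ t ∈ Finset.Ico (j+1) (n+1), (b (t + 1) - b t) := hsplit _ (by omega)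
  have hbm : b m = - (∑ t ∈ Finset.Ico m (j+1), (b (t + 1) - b t)
      + ∑ t ∈ Finset.Ico (j+1) (n+1), (b (t + 1) - b t)) := by
    rw [hsplit m (by omega), Finset.sum_Ico_consecutive _ hmi (by omega : j+1 ≤ n+1)]
  have hP : ((j:ℝ)+1-(m:ℝ)) * (b (j+1) - b j) ≤ ∑ t ∈ Finset.Ico m (j+1), (b (t + 1) - b t) := by
    have := Finset.card_nsmul_le_sum (Finset.Ico m (j+1)) (fun t => b (t+1) - b t)
      (b (j+1) - b j) (fun t ht => by
        refine dmono n b hconc ?_ ?_ <;> simp at ht <;> omega)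
    rw [nsmul_eq_mul, Nat.card_Ico, Nat.cast_sub hmi] at this
    push_cast at this ⊢
    linarith
  have hQ : ∑ t ∈ Finset.Ico (j+1) (n+1), (b (t + 1) - b t)
      ≤ ((n:ℝ) - (j:ℝ)) * (b (j+1) - b j) := by
    have := Finset.sum_le_card_nsmul (Finset.Ico (j+1) (n+1)) (fun t => b (t+1) - b t)
      (b (j+1) - b j) (fun t ht => by
        refine dmono n b hconc ?_ ?_ <;> simp at ht <;> omega)
    rw [nsmul_eq_mul, Nat.card_Ico, Nat.cast_sub (by omega : j+1 ≤ n+1)] at this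
    push_cast at this ⊢
    linarith
  have h1 : ((m:ℝ)) ≤ (j:ℝ)+1 := by exact_mod_cast hmi
  have h2 : ((j:ℝ)+1) ≤ (n:ℝ)+1 := by
    have hjn : (j:ℝ) ≤ (n:ℝ) := by exact_mod_cast (show j ≤ n by omega)
    linarith
  rw [hbi, hbm]
  push_cast
  nlinarith [hP, hQ, h1, h2]

end chord



lemma gaussR (k : ℕ) : ∑ i ∈ Finset.Ioc 0 k, (i:ℝ) = k*(k+1)/2 := by
  induction k with
  | zero => simp
  | succ k ih =>
    rw [Finset.sum_Ioc_succ_top (Nat.zero_le _), ih]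
    push_cast; ring

lemma icc_eq_ioc (n : ℕ) : Finset.Icc 1 n = Finset.Ioc 0 n := by
  rw [← Finset.Icc_add_one_left_eq_Ioc]; rfl

section SB
variable (n : ℕ) (b : ℕ → ℝ)

lemma sum_bound (hb0 : b 0 = 0) (hbn : b (n + 1) = 0)
    (hconc : ∀ i, i + 2 ≤ n + 1 → b (i + 1) ≥ (b i + b (i + 2)) / 2)
    {m : ℕ} (hm1 : 1 ≤ m) (hmn : m ≤ n) :
    ((n:ℝ) + 1) * b m ≤ 2 * ∑ i ∈ Finset.Icc 1 n, b i := by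
  have hm0 : (0:ℝ) < (m:ℝ) := by exact_mod_cast hm1
  have hmnR : (m:ℝ) ≤ (n:ℝ) := by exact_mod_cast hmn
  have hsplit : ∑ i ∈ Finset.Icc 1 n, b i
      = ∑ i ∈ Finset.Ioc 0 m, b i + ∑ i ∈ Finset.Ioc m n, b i := by
    rw [icc_eq_ioc, Finset.sum_Ioc_consecutive _ (Nat.zero_le m) hmn]
  -- part 1
  have P1 : (m:ℝ)*((m:ℝ)+1)/2 * b m ≤ (m:ℝ) * ∑ i ∈ Finset.Ioc 0 m, b i := by
    have h := Finset.sum_le_sum (s := Finset.Ioc 0 m)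
      (f := fun i : ℕ => (i:ℝ) * b m) (g := fun i : ℕ => (m:ℝ) * b i)
      (fun i hi => by
        simp only [Finset.mem_Ioc] at hi
        exact chord_left n b hb0 hconc hi.1 hi.2 hmn)
    rw [← Finset.sum_mul, ← Finset.mul_sum, gaussR] at h
    exact h
  -- part 2
  have hgsum : ∑ i ∈ Finset.Ioc m n, ((n:ℝ) + 1 - (i:ℝ))
      = ((n:ℝ)-m)*((n:ℝ)-m+1)/2 := by
    have hio : ∑ i ∈ Finset.Ioc 0 m, (i:ℝ) + ∑ i ∈ Finset.Ioc m n, (i:ℝ)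
        = ∑ i ∈ Finset.Ioc 0 n, (i:ℝ) :=
      Finset.sum_Ioc_consecutive _ (Nat.zero_le m) hmn
    rw [gaussR, gaussR] at hio
    have hcard : ((Finset.Ioc m n).card : ℝ) = (n:ℝ) - m := by
      rw [Nat.card_Ioc, Nat.cast_sub hmn]
    rw [Finset.sum_sub_distrib, Finset.sum_const, nsmul_eq_mul, hcard]
    nlinarith [hio]
  have P2 : ((n:ℝ)-m)*((n:ℝ)-m+1)/2 * b m ≤ ((n:ℝ)+1-m) * ∑ i ∈ Finset.Ioc m n, b i := by
    have h := Finset.sum_le_sum (s := Finset.Ioc m n)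
      (f := fun i : ℕ => ((n:ℝ) + 1 - (i:ℝ)) * b m) (g := fun i : ℕ => ((n:ℝ)+1-(m:ℝ)) * b i)
      (fun i hi => by
        simp only [Finset.mem_Ioc] at hi
        exact chord_right n b hb0 hbn hconc hm1 (le_of_lt hi.1) hi.2)
    rw [← Finset.sum_mul, ← Finset.mul_sum, hgsum] at h
    exact h
  -- divide
  have e1 : ((m:ℝ)+1)/2 * b m ≤ ∑ i ∈ Finset.Ioc 0 m, b i := by
    rw [← mul_le_mul_iff_right₀ hm0]
    nlinarith [P1]
  have hnm0 : (0:ℝ) < (n:ℝ)+1-m := by linarith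
  have e2 : ((n:ℝ)-m)/2 * b m ≤ ∑ i ∈ Finset.Ioc m n, b i := by
    rw [← mul_le_mul_iff_right₀ hnm0]
    nlinarith [P2]
  rw [hsplit]
  nlinarith [e1, e2]

end SB

lemma keyPointwise (n : ℕ) (hn : 4 ≤ n) (b : ℕ → ℝ)
    (hb0 : b 0 = 0) (hbn : b (n + 1) = 0)
    (hpos : ∀ i, 1 ≤ i → i ≤ n → 0 < b i)
    (hconc : ∀ i, i + 2 ≤ n + 1 → b (i + 1) ≥ (b i + b (i + 2)) / 2)
    (x : Fin n → ℝ) (hx0 : x ≠ 0) (hsum : (∑ i, x i) = 0) :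
    2 * (∑ i, b (i.1 + 1) * (x i) ^ 2) <
      (((n : ℝ) - 1) / n) * (∑ i ∈ Finset.Icc 1 n, b i) * (∑ i, (x i) ^ 2) := by
  obtain ⟨i₀, hi₀⟩ : ∃ i, x i ≠ 0 := Function.ne_iff.mp hx0
  have hsq : 0 < (x i₀)^2 := (sq_nonneg _).lt_of_ne (Ne.symm (pow_ne_zero 2 hi₀))
  have hS : 0 < ∑ i, (x i)^2 := lt_of_lt_of_le hsq
    (Finset.single_le_sum (f := fun i => (x i)^2) (fun i _ => sq_nonneg _) (Finset.mem_univ i₀))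
  rcases eq_or_lt_of_le hn with h4 | h5
  · -- n = 4
    subst h4
    have hIcc : ∑ i ∈ Finset.Icc 1 4, b i = b 1 + b 2 + b 3 + b 4 := by
      show ∑ i ∈ Finset.Icc 1 4, b i = _
      rw [show Finset.Icc 1 4 = {1, 2, 3, 4} from rfl]
      simp [Finset.sum_insert, Finset.mem_insert]; ring
    rw [Fin.sum_univ_four] at hsum
    rw [Fin.sum_univ_four] at hS
    rw [Fin.sum_univ_four, Fin.sum_univ_four]
    rw [hIcc]
    have e0 : ((0 : Fin 4).1 + 1) = 1 := rfl
    have e1 : ((1 : Fin 4).1 + 1) = 2 := rfl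
    have e2 : ((2 : Fin 4).1 + 1) = 3 := rfl
    have e3 : ((3 : Fin 4).1 + 1) = 4 := rfl
    rw [e0, e1, e2, e3]
    have hc1 := hconc 0 (by omega)
    have hc2 := hconc 1 (by omega)
    have hc3 := hconc 2 (by omega)
    have hc4 := hconc 3 (by omega)
    have := key4 (b 1) (b 2) (b 3) (b 4) (hpos 1 (by omega) (by omega)) (hpos 4 (by omega) (by omega))
      (by rw [hb0] at hc1; linarith) (by linarith) (by linarith)
      (by rw [show (4:ℕ)+1 = 5 from rfl, hbn] at hc4; linarith)
      (x 0) (x 1) (x 2) (x 3) hsum hS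
    have h34 : (((4:ℕ):ℝ) - 1) / ((4:ℕ):ℝ) = 3/4 := by norm_num
    rw [h34]
    nlinarith [this]
  · -- n ≥ 5
    have hn5 : (5:ℝ) ≤ (n:ℝ) := by exact_mod_cast h5
    have hn0 : (0:ℝ) < (n:ℝ) := by linarith
    have hT : 0 < ∑ i ∈ Finset.Icc 1 n, b i := by
      apply Finset.sum_pos
      · intro i hi
        simp only [Finset.mem_Icc] at hi
        exact hpos i hi.1 hi.2
      · exact ⟨1, by simp only [Finset.mem_Icc]; omega⟩
    obtain ⟨T, hTdef⟩ : ∃ t, ∑ i ∈ Finset.Icc 1 n, b i = t := ⟨_, rfl⟩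
    rw [hTdef] at hT ⊢
    have hcoord : ∀ i : Fin n, 2 * b (i.1 + 1) < ((n:ℝ)-1)/n * T := by
      intro i
      have hsb := sum_bound n b hb0 hbn hconc (m := i.1+1) (by omega) (by omega : i.1+1 ≤ n)
      rw [hTdef] at hsb
      have hkey : (4:ℝ) * T < ((n:ℝ)+1) * (((n:ℝ)-1)/n * T) := by
        rw [show ((n:ℝ)+1) * (((n:ℝ)-1)/n * T) = (((n:ℝ)+1)*((n:ℝ)-1)/n) * T by ring]
        have : (4:ℝ) < ((n:ℝ)+1)*((n:ℝ)-1)/n := by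
          rw [lt_div_iff₀ hn0]; nlinarith
        nlinarith [mul_lt_mul_of_pos_right this hT]
      have hnp : (0:ℝ) < (n:ℝ)+1 := by linarith
      have : ((n:ℝ)+1) * (2 * b (i.1+1)) < ((n:ℝ)+1) * (((n:ℝ)-1)/n * T) := by
        nlinarith [hsb, hkey]
      exact (mul_lt_mul_iff_right₀ hnp).mp this
    calc 2 * (∑ i, b (i.1 + 1) * (x i) ^ 2)
        = ∑ i, 2 * b (i.1 + 1) * (x i)^2 := by rw [Finset.mul_sum]; congr 1; ext i; ring
      _ < ∑ i, (((n:ℝ)-1)/n * T) * (x i)^2 := by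
          apply Finset.sum_lt_sum
          · intro i _
            exact mul_le_mul_of_nonneg_right (hcoord i).le (sq_nonneg _)
          · exact ⟨i₀, Finset.mem_univ _, by
              exact mul_lt_mul_of_pos_right (hcoord i₀) hsq⟩
      _ = ((n:ℝ)-1)/n * T * (∑ i, (x i)^2) := (Finset.mul_sum _ _ _).symm


/-- De Blassie's condition from concavity: if `n ≥ 4` and the sequence
`(0, σ₁², ..., σₙ², 0)` (given as `b`) is concave with positive interior
entries, then `((n-1)/n) Σ σᵢ² > 2·M₁`, where `M₁` is the supremum of the
constrained Rayleigh quotient over the hyperplane `{Σ xᵢ = 0}`. -/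
theorem deBlassie_condition_of_concavity (n : ℕ) (hn : 4 ≤ n) (b : ℕ → ℝ)
    (hb0 : b 0 = 0) (hbn : b (n + 1) = 0)
    (hpos : ∀ i, 1 ≤ i → i ≤ n → 0 < b i)
    (hconc : ∀ i, i + 2 ≤ n + 1 → b (i + 1) ≥ (b i + b (i + 2)) / 2) :
    (((n : ℝ) - 1) / n) * (∑ i ∈ Finset.Icc 1 n, b i) >
      2 * sSup {r : ℝ | ∃ x : Fin n → ℝ, x ≠ 0 ∧ (∑ i, x i) = 0 ∧
        r = (∑ i, b (i.1 + 1) * (x i) ^ 2) / (∑ i, (x i) ^ 2)} := by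
  set q : (Fin n → ℝ) → ℝ := fun x => ∑ i, b (i.1 + 1) * (x i) ^ 2 with hq
  set K : Set (Fin n → ℝ) := {x | (∑ i, (x i) ^ 2) = 1 ∧ (∑ i, x i) = 0} with hKdef
  have hqcont : Continuous q :=
    continuous_finset_sum _ (fun i _ => continuous_const.mul ((continuous_apply i).pow 2))
  -- K is compact
  have hKclosed : IsClosed K := by
    have h1 : IsClosed {x : Fin n → ℝ | (∑ i, (x i) ^ 2) = 1} :=
      isClosed_eq (continuous_finset_sum _ (fun i _ => (continuous_apply i).pow 2))
        continuous_const
    have h2 : IsClosed {x : Fin n → ℝ | (∑ i, x i) = 0} :=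
      isClosed_eq (continuous_finset_sum _ (fun i _ => continuous_apply i)) continuous_const
    exact h1.inter h2
  have hKbdd : Bornology.IsBounded K := by
    apply (Metric.isBounded_closedBall (x := (0 : Fin n → ℝ)) (r := 1)).subset
    intro x hx
    obtain ⟨hx1, -⟩ := hx
    rw [Metric.mem_closedBall]
    rw [dist_pi_le_iff (by norm_num : (0:ℝ) ≤ 1)]
    intro i
    rw [Real.dist_eq, Pi.zero_apply, sub_zero]
    have hle : (x i)^2 ≤ 1 := by
      rw [← hx1]
      exact Finset.single_le_sum (f := fun i => (x i)^2) (fun j _ => sq_nonneg _)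
        (Finset.mem_univ i)
    nlinarith [abs_nonneg (x i), sq_abs (x i)]
  have hK : IsCompact K := Metric.isCompact_of_isClosed_isBounded hKclosed hKbdd
  -- K is nonempty
  have hKne : K.Nonempty := by
    have h0n : 0 < n := by omega
    have h1n : 1 < n := by omega
    set i0 : Fin n := ⟨0, h0n⟩
    set i1 : Fin n := ⟨1, h1n⟩
    have hne : i0 ≠ i1 := by simp [i0, i1, Fin.ext_iff]
    set s : ℝ := Real.sqrt (1/2) with hs
    have hs2 : s^2 = 1/2 := Real.sq_sqrt (by norm_num)
    refine ⟨fun i => (if i = i0 then s else 0) + (if i = i1 then -s else 0), ?_, ?_⟩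
    · have hterm : ∀ i : Fin n, ((if i = i0 then s else 0) + (if i = i1 then -s else 0))^2
          = (if i = i0 then s^2 else 0) + (if i = i1 then s^2 else 0) := by
        intro i
        by_cases h0 : i = i0 <;> by_cases h1 : i = i1 <;>
          simp [h0, h1, hne, hne.symm] <;> first | (exfalso; exact hne (h0 ▸ h1 ▸ rfl)) | ring
      simp only [hterm, Finset.sum_add_distrib, Finset.sum_ite_eq', Finset.mem_univ, if_true]
      linarith [hs2]
    · simp only [Finset.sum_add_distrib, Finset.sum_ite_eq', Finset.mem_univ, if_true]
      ring
  -- the set is the image of K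
  have hset : {r : ℝ | ∃ x : Fin n → ℝ, x ≠ 0 ∧ (∑ i, x i) = 0 ∧
      r = (∑ i, b (i.1 + 1) * (x i) ^ 2) / (∑ i, (x i) ^ 2)} = q '' K := by
    ext r
    constructor
    · rintro ⟨x, hx0, hxsum, rfl⟩
      obtain ⟨i₀, hi₀⟩ : ∃ i, x i ≠ 0 := Function.ne_iff.mp hx0
      have ht : 0 < ∑ i, (x i)^2 :=
        lt_of_lt_of_le ((sq_nonneg _).lt_of_ne (Ne.symm (pow_ne_zero 2 hi₀)))
          (Finset.single_le_sum (f := fun i => (x i)^2) (fun j _ => sq_nonneg _)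
            (Finset.mem_univ i₀))
      set t : ℝ := ∑ i, (x i)^2 with htdef
      set c : ℝ := (Real.sqrt t)⁻¹ with hc
      have hc2 : c^2 = t⁻¹ := by
        rw [hc, inv_pow, Real.sq_sqrt ht.le]
      refine ⟨fun i => c * x i, ⟨?_, ?_⟩, ?_⟩
      · have : ∑ i, (c * x i)^2 = c^2 * t := by
          rw [htdef, Finset.mul_sum]
          exact Finset.sum_congr rfl (fun i _ => by ring)
        rw [this, hc2, inv_mul_cancel₀ ht.ne']
      · have : ∑ i, c * x i = c * ∑ i, x i := (Finset.mul_sum _ _ _).symm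
        rw [this, hxsum, mul_zero]
      · have : q (fun i => c * x i) = c^2 * ∑ i, b (i.1+1) * (x i)^2 := by
          rw [hq, Finset.mul_sum]
          exact Finset.sum_congr rfl (fun i _ => by ring)
        rw [this, hc2, div_eq_inv_mul]
    · rintro ⟨x, ⟨hx1, hxsum⟩, rfl⟩
      refine ⟨x, ?_, hxsum, ?_⟩
      · intro h0
        rw [h0] at hx1
        simp at hx1
      · rw [hx1, div_one]
  rw [hset]
  have hmem : sSup (q '' K) ∈ q '' K :=
    (hK.image hqcont).sSup_mem (hKne.image q)
  obtain ⟨y, hyK, hyq⟩ := hmem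
  rw [← hyq]
  obtain ⟨hy1, hysum⟩ := hyK
  have hy0 : y ≠ 0 := by
    intro h0
    rw [h0] at hy1
    simp at hy1
  have := keyPointwise n hn b hb0 hbn hpos hconc y hy0 hysum
  rw [hy1, mul_one] at this
  exact this
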